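/- arXiv:2510.02211 — 2 statements merged into one kernel-verified Lean document; each statement's English description precedes it below -/
import Mathlib

section
/- For every integer δ ≥ 2, the graph G(δ) on n = δ + 3 vertices, obtained from K_n by deleting the edges of a Hamiltonian cycle, is δ-regular and satisfies rad_p(G(δ)) = 2 = n - δ - 1. -/
open scoped Classical

/-- The closed neighbourhood `N[S]` of a finset of vertices. -/
noncomputable def closedNbhd {V : Type*} [Fintype V] (G : SimpleGraph V) (S : Finset V) :
    Finset V :=
  S ∪ S.biUnion fun v => G.neighborFinset v

/-- One propagation step of power domination. -/
noncomputable def pdStep {V : Type*} [Fintype V] (G : SimpleGraph V) (A : Finset V) : Finset V :=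
  A ∪ closedNbhd G (A.filter fun v => (G.neighborFinset v \ A).card ≤ 1)

/-- The monitored sets `P^i(S)`, with `P^0(S) = ∅` and `P^1(S) = N[S]`. -/
noncomputable def pdSeq {V : Type*} [Fintype V] (G : SimpleGraph V) (S : Finset V) : ℕ → Finset V
  | 0 => ∅
  | 1 => closedNbhd G S
  | (i + 2) => pdStep G (pdSeq G S (i + 1))

/-- `S` is a power dominating set of `G`. -/
def IsPDS {V : Type*} [Fintype V] (G : SimpleGraph V) (S : Finset V) : Prop :=
  ∃ i, pdSeq G S i = Finset.univ

/-- The power domination number `γ_p(G)`. -/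
noncomputable def pdNum {V : Type*} [Fintype V] (G : SimpleGraph V) : ℕ :=
  sInf {k | ∃ S : Finset V, IsPDS G S ∧ S.card = k}

/-- The propagation radius `rad_p(G, S)` of a PDS `S`. -/
noncomputable def pdRadS {V : Type*} [Fintype V] (G : SimpleGraph V) (S : Finset V) : ℕ :=
  sInf {i | pdSeq G S i = Finset.univ}

/-- The propagation radius `rad_p(G)`. -/
noncomputable def pdRad {V : Type*} [Fintype V] (G : SimpleGraph V) : ℕ :=
  sInf {r | ∃ S : Finset V, IsPDS G S ∧ S.card = pdNum G ∧ pdRadS G S = r}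

/-- The complement of the cycle `C_n` on `ZMod n`: the complete graph minus a
Hamiltonian cycle. -/
def cocycle (n : ℕ) : SimpleGraph (ZMod n) where
  Adj a b := a ≠ b ∧ a - b ≠ 1 ∧ b - a ≠ 1
  symm := by
    constructor
    rintro a b ⟨h1, h2, h3⟩
    exact ⟨h1.symm, h3, h2⟩
  loopless := by
    constructor
    rintro a ⟨h, -, -⟩
    exact h rfl

lemma zmod_ne (n : ℕ) (h1 : 0 < n) : ∀ k : ℕ, 0 < k → k < n → (k : ZMod n) ≠ 0 := by
  intro k hk hkn
  rw [Ne, ZMod.natCast_eq_zero_iff]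
  exact fun h => absurd (Nat.le_of_dvd hk h) (not_le.2 hkn)

lemma cocycle_adj (n : ℕ) (a b : ZMod n) :
    (cocycle n).Adj a b ↔ a ≠ b ∧ a - b ≠ 1 ∧ b - a ≠ 1 := Iff.rfl

lemma z1 {n : ℕ} (hn : 5 ≤ n) : (1 : ZMod n) ≠ 0 := by
  have := zmod_ne n (by omega) 1 one_pos (by omega); simpa using this
lemma z2 {n : ℕ} (hn : 5 ≤ n) : (2 : ZMod n) ≠ 0 := by
  have := zmod_ne n (by omega) 2 two_pos (by omega); simpa using this
lemma z3 {n : ℕ} (hn : 5 ≤ n) : (3 : ZMod n) ≠ 0 := by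
  have := zmod_ne n (by omega) 3 (by norm_num) (by omega); simpa using this
lemma z4 {n : ℕ} (hn : 5 ≤ n) : (4 : ZMod n) ≠ 0 := by
  have := zmod_ne n (by omega) 4 (by norm_num) (by omega); simpa using this

lemma nbhd_eq (n : ℕ) [NeZero n] (v : ZMod n) :
    (cocycle n).neighborFinset v = Finset.univ \ {v - 1, v, v + 1} := by
  ext w
  simp only [SimpleGraph.mem_neighborFinset, cocycle_adj, Finset.mem_sdiff, Finset.mem_univ,
    true_and, Finset.mem_insert, Finset.mem_singleton]
  constructor
  · rintro ⟨h1, h2, h3⟩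
    push_neg
    refine ⟨fun h => h2 (by rw [h]; ring), fun h => h1 h.symm, fun h => h3 (by rw [h]; ring)⟩
  · intro h
    push_neg at h
    obtain ⟨ha, hb, hc⟩ := h
    exact ⟨fun h => hb h.symm, fun h => ha (by linear_combination -h),
      fun h => hc (by linear_combination h)⟩

lemma pdSeq_two {V : Type*} [Fintype V] (G : SimpleGraph V) (S : Finset V) :
    pdSeq G S 2 = pdStep G (pdSeq G S 1) := rfl

lemma pdSeq_empty {V : Type*} [Fintype V] (G : SimpleGraph V) : ∀ i, pdSeq G ∅ i = ∅
  | 0 => rfl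
  | 1 => by simp [pdSeq, closedNbhd]
  | (i+2) => by
      rw [show pdSeq G ∅ (i+2) = pdStep G (pdSeq G ∅ (i+1)) from rfl,
        pdSeq_empty G (i+1)]
      simp [pdStep, closedNbhd]

lemma step1 (n : ℕ) [NeZero n] (hn : 5 ≤ n) :
    closedNbhd (cocycle n) {0} = Finset.univ \ {-1, 1} := by
  ext w
  simp only [closedNbhd, Finset.mem_union, Finset.mem_singleton, Finset.singleton_biUnion,
    nbhd_eq, Finset.mem_sdiff, Finset.mem_univ, true_and, Finset.mem_insert,
    zero_sub, zero_add]
  constructor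
  · rintro (rfl | h)
    · push_neg
      exact ⟨fun h => z1 hn (by linear_combination h), fun h => z1 hn h.symm⟩
    · push_neg at h ⊢
      exact ⟨h.1, h.2.2⟩
  · intro h
    push_neg at h
    by_cases hw : w = 0
    · exact Or.inl hw
    · exact Or.inr (by push_neg; exact ⟨h.1, hw, h.2⟩)

lemma mem_A (n : ℕ) [NeZero n] (w : ZMod n) :
    w ∈ Finset.univ \ ({-1, 1} : Finset (ZMod n)) ↔ w ≠ -1 ∧ w ≠ 1 := by
  simp [not_or]

lemma step2 (n : ℕ) [NeZero n] (hn : 5 ≤ n) :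
    pdStep (cocycle n) (Finset.univ \ {-1, 1}) = Finset.univ := by
  set A : Finset (ZMod n) := Finset.univ \ {-1, 1} with hA
  have h2A : (2 : ZMod n) ∈ A := (mem_A n 2).2
    ⟨fun h => z3 hn (by linear_combination h), fun h => z1 hn (by linear_combination h)⟩
  have hm2A : (-2 : ZMod n) ∈ A := (mem_A n (-2)).2
    ⟨fun h => z1 hn (by linear_combination -h), fun h => z3 hn (by linear_combination -h)⟩
  have hnotA : ∀ x : ZMod n, x ∉ A → x = -1 ∨ x = 1 := by
    intro x hx
    by_contra hc
    push_neg at hc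
    exact hx ((mem_A n x).2 hc)
  have h2card : ((cocycle n).neighborFinset 2 \ A).card ≤ 1 := by
    have hsub : (cocycle n).neighborFinset 2 \ A ⊆ {-1} := by
      intro x hx
      rw [Finset.mem_sdiff, nbhd_eq] at hx
      obtain ⟨hx1, hx2⟩ := hx
      rcases hnotA x hx2 with rfl | rfl
      · exact Finset.mem_singleton_self _
      · exfalso
        rw [Finset.mem_sdiff] at hx1
        exact hx1.2 (by simp only [Finset.mem_insert]; left; ring)
    calc ((cocycle n).neighborFinset 2 \ A).card ≤ ({-1} : Finset (ZMod n)).card :=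
          Finset.card_le_card hsub
      _ = 1 := Finset.card_singleton _
  have hm2card : ((cocycle n).neighborFinset (-2) \ A).card ≤ 1 := by
    have hsub : (cocycle n).neighborFinset (-2) \ A ⊆ {1} := by
      intro x hx
      rw [Finset.mem_sdiff, nbhd_eq] at hx
      obtain ⟨hx1, hx2⟩ := hx
      rcases hnotA x hx2 with rfl | rfl
      · exfalso
        rw [Finset.mem_sdiff] at hx1
        exact hx1.2 (by simp only [Finset.mem_insert, Finset.mem_singleton]; right; right; ring)
      · exact Finset.mem_singleton_self _
    calc ((cocycle n).neighborFinset (-2) \ A).card ≤ ({1} : Finset (ZMod n)).card :=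
          Finset.card_le_card hsub
      _ = 1 := Finset.card_singleton _
  have hm1mem : (-1 : ZMod n) ∈ (cocycle n).neighborFinset 2 := by
    rw [nbhd_eq]
    simp only [Finset.mem_sdiff, Finset.mem_univ, true_and, Finset.mem_insert,
      Finset.mem_singleton, not_or]
    refine ⟨fun h => z2 hn (by linear_combination -h), fun h => z3 hn (by linear_combination -h),
      fun h => z4 hn (by linear_combination -h)⟩
  have h1mem : (1 : ZMod n) ∈ (cocycle n).neighborFinset (-2) := by
    rw [nbhd_eq]
    simp only [Finset.mem_sdiff, Finset.mem_univ, true_and, Finset.mem_insert,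
      Finset.mem_singleton, not_or]
    refine ⟨fun h => z4 hn (by linear_combination h), fun h => z3 hn (by linear_combination h),
      fun h => z2 hn (by linear_combination h)⟩
  apply Finset.eq_univ_of_forall
  intro w
  simp only [pdStep, closedNbhd, Finset.mem_union, Finset.mem_biUnion, Finset.mem_filter]
  by_cases hw1 : w = 1
  · subst hw1
    refine Or.inr (Or.inr ⟨-2, ⟨hm2A, ?_⟩, h1mem⟩)
    convert hm2card using 2
    ext x
    simp [Finset.mem_sdiff]
  by_cases hwm1 : w = -1
  · subst hwm1
    refine Or.inr (Or.inr ⟨2, ⟨h2A, ?_⟩, hm1mem⟩)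
    convert h2card using 2
    ext x
    simp [Finset.mem_sdiff]
  · exact Or.inl ((mem_A n w).2 ⟨hwm1, hw1⟩)

lemma pds0 (n : ℕ) [NeZero n] (hn : 5 ≤ n) :
    pdSeq (cocycle n) {0} 2 = Finset.univ := by
  rw [pdSeq_two, show pdSeq (cocycle n) {0} 1 = closedNbhd (cocycle n) {0} from rfl,
    step1 n hn, step2 n hn]

lemma not_one (n : ℕ) [NeZero n] (hn : 5 ≤ n) (v : ZMod n) :
    pdSeq (cocycle n) {v} 1 ≠ Finset.univ := by
  intro h
  have hmem : v + 1 ∈ closedNbhd (cocycle n) {v} := by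
    rw [show closedNbhd (cocycle n) {v} = pdSeq (cocycle n) {v} 1 from rfl, h]
    exact Finset.mem_univ _
  simp only [closedNbhd, Finset.mem_union, Finset.mem_singleton, Finset.singleton_biUnion,
    nbhd_eq, Finset.mem_sdiff, Finset.mem_univ, true_and, Finset.mem_insert,
    Finset.mem_singleton] at hmem
  rcases hmem with h1 | h2
  · exact z1 hn (by linear_combination h1)
  · simp at h2

lemma univ_ne (n : ℕ) [NeZero n] : (Finset.univ : Finset (ZMod n)) ≠ ∅ :=
  Finset.univ_nonempty.ne_empty

lemma pdNum_eq (n : ℕ) [NeZero n] (hn : 5 ≤ n) : pdNum (cocycle n) = 1 := by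
  have h1 : 1 ∈ {k | ∃ S : Finset (ZMod n), IsPDS (cocycle n) S ∧ S.card = k} :=
    ⟨{0}, ⟨2, pds0 n hn⟩, Finset.card_singleton 0⟩
  refine le_antisymm (Nat.sInf_le h1) ?_
  have hmem : pdNum (cocycle n)
      ∈ {k | ∃ S : Finset (ZMod n), IsPDS (cocycle n) S ∧ S.card = k} :=
    Nat.sInf_mem ⟨1, h1⟩
  obtain ⟨S, ⟨i, hi⟩, hcard⟩ := hmem
  rcases Nat.eq_zero_or_pos (pdNum (cocycle n)) with h0 | h
  · exfalso
    rw [h0, Finset.card_eq_zero] at hcard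
    subst hcard
    rw [pdSeq_empty] at hi
    exact univ_ne n hi.symm
  · exact h

lemma pdRadS_singleton (n : ℕ) [NeZero n] (hn : 5 ≤ n) {v : ZMod n}
    (h : IsPDS (cocycle n) {v}) : 2 ≤ pdRadS (cocycle n) {v} := by
  obtain ⟨i, hi⟩ := h
  have hmem : pdRadS (cocycle n) {v}
      ∈ {j | pdSeq (cocycle n) {v} j = Finset.univ} := Nat.sInf_mem ⟨i, hi⟩
  by_contra hc
  push_neg at hc
  have : pdRadS (cocycle n) {v} = 0 ∨ pdRadS (cocycle n) {v} = 1 := by omega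
  rcases this with h0 | h0 <;> rw [h0] at hmem
  · apply univ_ne n
    rw [← hmem]; rfl
  · exact not_one n hn v hmem

lemma pdRadS_zero (n : ℕ) [NeZero n] (hn : 5 ≤ n) :
    pdRadS (cocycle n) ({0} : Finset (ZMod n)) = 2 := by
  have h2 : 2 ∈ {j | pdSeq (cocycle n) ({0} : Finset (ZMod n)) j = Finset.univ} := pds0 n hn
  exact le_antisymm (Nat.sInf_le h2) (pdRadS_singleton n hn ⟨2, pds0 n hn⟩)

lemma pdRad_eq (n : ℕ) [NeZero n] (hn : 5 ≤ n) : pdRad (cocycle n) = 2 := by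
  have h2 : 2 ∈ {r | ∃ S : Finset (ZMod n), IsPDS (cocycle n) S ∧ S.card = pdNum (cocycle n)
      ∧ pdRadS (cocycle n) S = r} :=
    ⟨{0}, ⟨2, pds0 n hn⟩, by rw [pdNum_eq n hn]; exact Finset.card_singleton 0, pdRadS_zero n hn⟩
  refine le_antisymm (Nat.sInf_le h2) ?_
  have hmem : pdRad (cocycle n) ∈ {r | ∃ S : Finset (ZMod n), IsPDS (cocycle n) S
      ∧ S.card = pdNum (cocycle n) ∧ pdRadS (cocycle n) S = r} := Nat.sInf_mem ⟨2, h2⟩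
  obtain ⟨S, hS, hcard, hrad⟩ := hmem
  rw [pdNum_eq n hn, Finset.card_eq_one] at hcard
  obtain ⟨v, rfl⟩ := hcard
  rw [← hrad]
  exact pdRadS_singleton n hn hS

theorem stmt_8 (δ : ℕ) (hδ : 2 ≤ δ) :
    (∀ v : ZMod (δ + 3), (cocycle (δ + 3)).degree v = δ) ∧
      pdRad (cocycle (δ + 3)) = 2 ∧ 2 = (δ + 3) - δ - 1 := by
  have hn : 5 ≤ δ + 3 := by omega
  haveI : NeZero (δ + 3) := ⟨by omega⟩
  refine ⟨?_, pdRad_eq (δ + 3) hn, by omega⟩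
  intro v
  have hcard3 : ({v - 1, v, v + 1} : Finset (ZMod (δ + 3))).card = 3 := by
    rw [Finset.card_insert_of_notMem, Finset.card_insert_of_notMem, Finset.card_singleton]
    · simp only [Finset.mem_singleton]
      exact fun h => z1 hn (by linear_combination -h)
    · simp only [Finset.mem_insert, Finset.mem_singleton, not_or]
      exact ⟨fun h => z1 hn (by linear_combination -h), fun h => z2 hn (by linear_combination -h)⟩
  have hd : (cocycle (δ + 3)).degree v = ((cocycle (δ + 3)).neighborFinset v).card := rfl
  rw [hd, nbhd_eq, Finset.card_univ_diff, hcard3, ZMod.card]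
  omega
end

section
/- Let G be a connected graph of order n with minimum degree δ = 2 and power domination number γ_p = 2. Then rad_p(G) ≤ n - 5. -/
open scoped Classical

section Aux

variable {V : Type*} [Fintype V] (G : SimpleGraph V)

lemma mem_closedNbhd {S : Finset V} {x : V} :
    x ∈ closedNbhd G S ↔ x ∈ S ∨ ∃ v ∈ S, G.Adj v x := by
  simp [closedNbhd]

lemma subset_closedNbhd (S : Finset V) : S ⊆ closedNbhd G S :=
  Finset.subset_union_left

lemma closedNbhd_mono {S T : Finset V} (h : S ⊆ T) : closedNbhd G S ⊆ closedNbhd G T := by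
  intro x hx
  rw [mem_closedNbhd] at hx ⊢
  rcases hx with hx | ⟨v, hv, hadj⟩
  · exact Or.inl (h hx)
  · exact Or.inr ⟨v, h hv, hadj⟩

lemma mem_closedNbhd_singleton {x y : V} :
    y ∈ closedNbhd G {x} ↔ y = x ∨ G.Adj x y := by
  simp [mem_closedNbhd]

lemma closedNbhd_singleton (x : V) :
    closedNbhd G {x} = insert x (G.neighborFinset x) := by
  ext y
  simp [mem_closedNbhd_singleton, eq_comm]

lemma card_closedNbhd_singleton (x : V) :
    (closedNbhd G {x}).card = G.degree x + 1 := by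
  rw [closedNbhd_singleton, Finset.card_insert_of_notMem (by simp)]
  rfl

lemma closedNbhd_pair (u v : V) :
    closedNbhd G {u, v} = closedNbhd G {u} ∪ closedNbhd G {v} := by
  ext y
  simp only [Finset.mem_union, mem_closedNbhd, Finset.mem_singleton, Finset.mem_insert]
  constructor
  · rintro (h | ⟨w, (rfl | rfl), hadj⟩)
    · rcases h with rfl | rfl
      · exact Or.inl (Or.inl rfl)
      · exact Or.inr (Or.inl rfl)
    · exact Or.inl (Or.inr ⟨w, rfl, hadj⟩)
    · exact Or.inr (Or.inr ⟨w, rfl, hadj⟩)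
  · rintro ((rfl | ⟨w, rfl, hadj⟩) | (rfl | ⟨w, rfl, hadj⟩))
    · exact Or.inl (Or.inl rfl)
    · exact Or.inr ⟨w, Or.inl rfl, hadj⟩
    · exact Or.inl (Or.inr rfl)
    · exact Or.inr ⟨w, Or.inr rfl, hadj⟩

lemma subset_pdStep (A : Finset V) : A ⊆ pdStep G A :=
  Finset.subset_union_left

lemma pdStep_mono {A B : Finset V} (h : A ⊆ B) : pdStep G A ⊆ pdStep G B := by
  unfold pdStep
  apply Finset.union_subset_union h
  apply closedNbhd_mono
  intro v hv
  rw [Finset.mem_filter] at hv ⊢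
  refine ⟨h hv.1, le_trans (Finset.card_le_card ?_) hv.2⟩
  exact Finset.sdiff_subset_sdiff (le_refl _) h

lemma closedNbhd_subset_pdStep {A : Finset V} {x : V} (hx : x ∈ A)
    (hcard : (G.neighborFinset x \ A).card ≤ 1) : closedNbhd G {x} ⊆ pdStep G A := by
  have hfil : x ∈ A.filter fun v => (G.neighborFinset v \ A).card ≤ 1 :=
    Finset.mem_filter.mpr ⟨hx, hcard⟩
  exact le_trans (closedNbhd_mono G (Finset.singleton_subset_iff.mpr hfil))
    Finset.subset_union_right

lemma pdSeq_one (S : Finset V) : pdSeq G S 1 = closedNbhd G S := rfl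

lemma pdSeq_succ {S : Finset V} {k : ℕ} (hk : 1 ≤ k) :
    pdSeq G S (k + 1) = pdStep G (pdSeq G S k) := by
  match k, hk with
  | (i+1), _ => rfl

lemma pdSeq_mono_index (S : Finset V) : Monotone (pdSeq G S) := by
  apply monotone_nat_of_le_succ
  intro k
  match k with
  | 0 => exact Finset.empty_subset _
  | (i+1) => exact subset_pdStep G _

lemma pdSeq_le_shift {S T : Finset V} {j : ℕ} (hj : 1 ≤ j)
    (h : pdSeq G S 1 ⊆ pdSeq G T j) (k : ℕ) : pdSeq G S (1 + k) ⊆ pdSeq G T (j + k) := by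
  induction k with
  | zero => exact h
  | succ k ih =>
      have e1 : 1 + (k + 1) = (1 + k) + 1 := by omega
      have e2 : j + (k + 1) = (j + k) + 1 := by omega
      rw [e1, e2, pdSeq_succ G (by omega), pdSeq_succ G (by omega)]
      exact pdStep_mono G ih

lemma isPDS_of_le {S T : Finset V} {j : ℕ} (hj : 1 ≤ j)
    (h : pdSeq G S 1 ⊆ pdSeq G T j) (hS : IsPDS G S) : IsPDS G T := by
  obtain ⟨i, hi⟩ := hS
  have h1 : pdSeq G S (max i 1) = Finset.univ := by
    apply Finset.univ_subset_iff.mp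
    rw [← hi]
    exact pdSeq_mono_index G S (le_max_left i 1)
  have h2 : pdSeq G S (1 + (max i 1 - 1)) = Finset.univ := by
    rw [show 1 + (max i 1 - 1) = max i 1 by omega]; exact h1
  refine ⟨j + (max i 1 - 1), Finset.univ_subset_iff.mp ?_⟩
  rw [← h2]
  exact pdSeq_le_shift G hj h _

end Aux

section Quant

variable {V : Type*} [Fintype V] (G : SimpleGraph V)

lemma pdSeq_strict {S : Finset V} (hS : IsPDS G S) {k : ℕ} (hk : 1 ≤ k)
    (h : pdSeq G S k ≠ Finset.univ) :
    (pdSeq G S k).card + 1 ≤ (pdSeq G S (k + 1)).card := by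
  by_contra hc
  push_neg at hc
  have hsub : pdSeq G S k ⊆ pdSeq G S (k + 1) := pdSeq_mono_index G S (by omega)
  have heq : pdSeq G S (k+1) = pdSeq G S k :=
    (Finset.eq_of_subset_of_card_le hsub (by omega)).symm
  have hconst : ∀ j, k ≤ j → pdSeq G S j = pdSeq G S k := by
    intro j hj
    induction j with
    | zero => omega
    | succ j ih =>
        rcases Nat.lt_or_ge k (j+1) with hlt | hge
        · have hkj : k ≤ j := by omega
          have := ih hkj
          rw [pdSeq_succ G (by omega : 1 ≤ j), this]
          rw [pdSeq_succ G hk] at heq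
          exact heq
        · have : k = j + 1 := by omega
          rw [this]
  obtain ⟨i, hi⟩ := hS
  rcases le_or_gt i k with hik | hik
  · exact h (Finset.univ_subset_iff.mp (hi ▸ pdSeq_mono_index G S hik))
  · exact h ((hconst i (by omega)).symm.trans hi)

lemma radius_bound {S : Finset V} (hS : IsPDS G S) :
    ∀ m k, 1 ≤ k → Fintype.card V ≤ (pdSeq G S k).card + m → pdRadS G S ≤ k + m := by
  intro m
  induction m with
  | zero =>
      intro k hk hle
      have hcard : (pdSeq G S k).card = Fintype.card V :=
        le_antisymm (Finset.card_le_univ _) (by omega)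
      have : pdSeq G S k = Finset.univ := Finset.eq_univ_of_card _ hcard
      exact Nat.sInf_le this
  | succ m ih =>
      intro k hk hle
      by_cases h : pdSeq G S k = Finset.univ
      · have : pdRadS G S ≤ k := Nat.sInf_le h
        omega
      · have hstrict := pdSeq_strict G hS hk h
        have := ih (k+1) (by omega) (by omega)
        omega

end Quant

section Keys

variable {V : Type*} [Fintype V] (G : SimpleGraph V)

lemma mem_closedNbhd_of_adj {x y : V} (h : G.Adj x y) : y ∈ closedNbhd G {x} :=
  (mem_closedNbhd_singleton G).mpr (Or.inr h)

lemma mem_closedNbhd_self (x : V) : x ∈ closedNbhd G {x} :=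
  (mem_closedNbhd_singleton G).mpr (Or.inl rfl)

/-- If `w` is adjacent to both `u` and `v`, `u` has at most one neighbour outside `N[w]`,
and `v` has at most one neighbour outside `N[u] ∪ N[w]`, then `{w}` power dominates
whenever `{u,v}` does. -/
lemma cnbr {w u v : V} (hwu : G.Adj w u) (hwv : G.Adj w v)
    (h1 : (G.neighborFinset u \ closedNbhd G {w}).card ≤ 1)
    (h2 : (G.neighborFinset v \ (closedNbhd G {u} ∪ closedNbhd G {w})).card ≤ 1)
    (hS : IsPDS G {u, v}) : IsPDS G {w} := by
  have e2 : pdSeq G {w} 2 = pdStep G (closedNbhd G {w}) := rfl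
  have e3 : pdSeq G {w} 3 = pdStep G (pdSeq G {w} 2) := rfl
  have hu1 : u ∈ closedNbhd G {w} := mem_closedNbhd_of_adj G hwu
  have hNu : closedNbhd G {u} ⊆ pdSeq G {w} 2 := by
    rw [e2]; exact closedNbhd_subset_pdStep G hu1 h1
  have hP12 : closedNbhd G {w} ⊆ pdSeq G {w} 2 := by
    rw [e2]; exact subset_pdStep G _
  have hv2 : v ∈ pdSeq G {w} 2 := hP12 (mem_closedNbhd_of_adj G hwv)
  have h2' : (G.neighborFinset v \ pdSeq G {w} 2).card ≤ 1 := by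
    refine le_trans (Finset.card_le_card ?_) h2
    exact Finset.sdiff_subset_sdiff (le_refl _) (Finset.union_subset hNu hP12)
  have hNv : closedNbhd G {v} ⊆ pdSeq G {w} 3 := by
    rw [e3]; exact closedNbhd_subset_pdStep G hv2 h2'
  have hsub : pdSeq G {u, v} 1 ⊆ pdSeq G {w} 3 := by
    rw [pdSeq_one, closedNbhd_pair]
    refine Finset.union_subset (hNu.trans ?_) hNv
    rw [e3]; exact subset_pdStep G _
  exact isPDS_of_le G (by omega) hsub hS

/-- If `u ~ v` and `deg u = 2` then `{v}` power dominates whenever `{u, v}` does. -/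
lemma key2 {u v : V} (hadj : G.Adj u v) (hdegu : G.degree u = 2)
    (hS : IsPDS G {u, v}) : IsPDS G {v} := by
  have e2 : pdSeq G {v} 2 = pdStep G (closedNbhd G {v}) := rfl
  have hu1 : u ∈ closedNbhd G {v} := mem_closedNbhd_of_adj G hadj.symm
  have h1 : (G.neighborFinset u \ closedNbhd G {v}).card ≤ 1 := by
    have hsub : G.neighborFinset u \ closedNbhd G {v} ⊆ (G.neighborFinset u).erase v := by
      intro z hz
      rw [Finset.mem_sdiff] at hz
      rw [Finset.mem_erase]
      exact ⟨fun h => hz.2 (h ▸ mem_closedNbhd_self G v), hz.1⟩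
    refine le_trans (Finset.card_le_card hsub) ?_
    rw [Finset.card_erase_of_mem (by rwa [SimpleGraph.mem_neighborFinset])]
    have : (G.neighborFinset u).card = 2 := hdegu
    omega
  have hNu : closedNbhd G {u} ⊆ pdSeq G {v} 2 := by
    rw [e2]; exact closedNbhd_subset_pdStep G hu1 h1
  have hsub : pdSeq G {u, v} 1 ⊆ pdSeq G {v} 2 := by
    rw [pdSeq_one, closedNbhd_pair]
    refine Finset.union_subset hNu ?_
    rw [e2]; exact subset_pdStep G _
  exact isPDS_of_le G (by omega) hsub hS

/-- If some optimal `S` has `N[S] ⊆ N[x]` with `|N[x]| ≥ 5`, we get a contradiction. -/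
lemma hub5 (hH : ∀ T, IsPDS G T → T.card = 2 → (pdSeq G T 1).card ≤ 5)
    (hNoSingle : ∀ x : V, ¬ IsPDS G {x}) {S : Finset V} {x : V}
    (hS : IsPDS G S)
    (hsub : pdSeq G S 1 ⊆ closedNbhd G {x}) (hc : 5 ≤ (closedNbhd G {x}).card) :
    False := by
  have hall : ∀ y, y ∈ closedNbhd G {x} := by
    intro y
    by_contra hy
    have hxy : y ≠ x := fun h => hy (h ▸ mem_closedNbhd_self G x)
    have hgood : IsPDS G {x, y} := by
      refine isPDS_of_le G (le_refl 1) ?_ hS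
      rw [pdSeq_one]
      exact hsub.trans (closedNbhd_mono G (by intro z hz; simp at hz; simp [hz]))
    have hcard2 : ({x, y} : Finset V).card = 2 := Finset.card_pair (Ne.symm hxy)
    have hle := hH _ hgood hcard2
    rw [pdSeq_one, closedNbhd_pair] at hle
    have hins : insert y (closedNbhd G {x}) ⊆ closedNbhd G {x} ∪ closedNbhd G {y} := by
      refine Finset.insert_subset ?_ Finset.subset_union_left
      exact Finset.mem_union_right _ (mem_closedNbhd_self G y)
    have := Finset.card_le_card hins
    rw [Finset.card_insert_of_notMem hy] at this
    omega
  have huniv : closedNbhd G {x} = Finset.univ := Finset.eq_univ_iff_forall.mpr hall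
  exact hNoSingle x ⟨1, huniv⟩

/-- A nonempty neighbourhood-closed set in a connected graph is everything. -/
lemma closed_eq_univ (hconn : G.Connected) {K : Finset V} {z₀ : V} (hz : z₀ ∈ K)
    (hcl : ∀ z ∈ K, ∀ y, G.Adj z y → y ∈ K) : K = Finset.univ := by
  have haux : ∀ (a b : V), G.Walk a b → a ∈ K → b ∈ K := by
    intro a b w
    induction w with
    | nil => exact id
    | cons h p ih => exact fun ha => ih (hcl _ ha _ h)
  refine Finset.eq_univ_iff_forall.mpr fun y => ?_
  exact haux z₀ y ((hconn z₀ y).some) hz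

end Keys

section Cases

variable {V : Type*} [Fintype V] (G : SimpleGraph V)

lemma mem_closedNbhd_pair_cases {u w : V} (h : w ∈ closedNbhd G {u}) :
    w = u ∨ G.Adj u w := (mem_closedNbhd_singleton G).mp h

/-- Non-adjacent case with `deg u = 2`: some singleton power dominates. -/
lemma master_II {u v : V}
    (hAB : (pdSeq G {u, v} 1).card ≤ 5)
    (hdegv2 : 2 ≤ G.degree v)
    (hne : u ≠ v) (hnadj : ¬ G.Adj u v) (hdu : G.degree u = 2)
    (hS : IsPDS G {u, v}) : ∃ w, IsPDS G {w} := by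
  set A := closedNbhd G {u} with hAdef
  set B := closedNbhd G {v} with hBdef
  have hA : A.card = 3 := by rw [hAdef, card_closedNbhd_singleton, hdu]
  have hB : B.card = G.degree v + 1 := card_closedNbhd_singleton G v
  have hABcard : (A ∪ B).card ≤ 5 := by
    rw [pdSeq_one, closedNbhd_pair] at hAB; exact hAB
  have hid := Finset.card_union_add_card_inter A B
  have hpos : 0 < (A ∩ B).card := by omega
  obtain ⟨w, hw⟩ := Finset.card_pos.mp hpos
  have hwA : w ∈ A := (Finset.mem_inter.mp hw).1
  have hwB : w ∈ B := (Finset.mem_inter.mp hw).2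
  have huB : u ∉ B := by
    intro h
    rcases mem_closedNbhd_pair_cases G h with h' | h'
    · exact hne h'
    · exact hnadj h'.symm
  have hvA : v ∉ A := by
    intro h
    rcases mem_closedNbhd_pair_cases G h with h' | h'
    · exact hne h'.symm
    · exact hnadj h'
  have hadjuw : G.Adj u w := by
    rcases mem_closedNbhd_pair_cases G hwA with rfl | h'
    · exact absurd hwB huB
    · exact h'
  have hadjvw : G.Adj v w := by
    rcases mem_closedNbhd_pair_cases G hwB with rfl | h'
    · exact absurd hwA hvA
    · exact h'
  have h1 : (G.neighborFinset u \ closedNbhd G {w}).card ≤ 1 := by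
    have hsub : G.neighborFinset u \ closedNbhd G {w} ⊆ (G.neighborFinset u).erase w := by
      intro z hz
      rw [Finset.mem_sdiff] at hz
      rw [Finset.mem_erase]
      exact ⟨fun h => hz.2 (h ▸ mem_closedNbhd_self G w), hz.1⟩
    refine le_trans (Finset.card_le_card hsub) ?_
    rw [Finset.card_erase_of_mem (by rwa [SimpleGraph.mem_neighborFinset])]
    have : (G.neighborFinset u).card = 2 := hdu
    omega
  have h2 : (G.neighborFinset v \ (closedNbhd G {u} ∪ closedNbhd G {w})).card ≤ 1 := by
    have hBA := Finset.card_inter_add_card_sdiff B A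
    rw [Finset.inter_comm] at hBA
    have hvBA : v ∈ B \ A := Finset.mem_sdiff.mpr ⟨mem_closedNbhd_self G v, hvA⟩
    have hsub : G.neighborFinset v \ (closedNbhd G {u} ∪ closedNbhd G {w}) ⊆
        (B \ A).erase v := by
      intro z hz
      rw [Finset.mem_sdiff, Finset.mem_union, SimpleGraph.mem_neighborFinset] at hz
      rw [Finset.mem_erase, Finset.mem_sdiff]
      refine ⟨fun h => G.irrefl (h ▸ hz.1), mem_closedNbhd_of_adj G hz.1, fun hA' => hz.2 (Or.inl hA')⟩
    refine le_trans (Finset.card_le_card hsub) ?_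
    rw [Finset.card_erase_of_mem hvBA]
    omega
  exact ⟨w, cnbr G hadjuw.symm hadjvw.symm h1 h2 hS⟩

end Cases

section CaseII3

variable {V : Type*} [Fintype V] (G : SimpleGraph V)

lemma mem_nbrF {x y : V} : y ∈ G.neighborFinset x ↔ G.Adj x y :=
  SimpleGraph.mem_neighborFinset G x y

lemma case_II3 (hconn : G.Connected)
    (hH : ∀ T, IsPDS G T → T.card = 2 → (pdSeq G T 1).card ≤ 5)
    (hNoSingle : ∀ x : V, ¬ IsPDS G {x}) {u v : V}
    (hne : u ≠ v) (hnadj : ¬ G.Adj u v) (hdu : G.degree u = 3) (hdv : G.degree v = 3)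
    (hS : IsPDS G {u, v}) : False := by
  set A := closedNbhd G {u} with hAdef
  set B := closedNbhd G {v} with hBdef
  have hA : A.card = 4 := by rw [hAdef, card_closedNbhd_singleton, hdu]
  have hB : B.card = 4 := by rw [hBdef, card_closedNbhd_singleton, hdv]
  have hnbruc : (G.neighborFinset u).card = 3 := hdu
  have hnbrvc : (G.neighborFinset v).card = 3 := hdv
  have hABcard : (A ∪ B).card ≤ 5 := by
    have := hH _ hS (Finset.card_pair hne)
    rwa [pdSeq_one, closedNbhd_pair, ← hAdef, ← hBdef] at this
  have huB : u ∉ B := by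
    intro h
    rcases mem_closedNbhd_pair_cases G h with h' | h'
    · exact hne h'
    · exact hnadj h'.symm
  have hvA : v ∉ A := by
    intro h
    rcases mem_closedNbhd_pair_cases G h with h' | h'
    · exact hne h'.symm
    · exact hnadj h'
  have hid := Finset.card_union_add_card_inter A B
  have hsub1 : A ∩ B ⊆ G.neighborFinset u := by
    intro z hz
    obtain ⟨hzA, hzB⟩ := Finset.mem_inter.mp hz
    rcases mem_closedNbhd_pair_cases G hzA with h' | h'
    · exact absurd (h' ▸ hzB) huB
    · exact (mem_nbrF G).mpr h'
  have hsub2 : A ∩ B ⊆ G.neighborFinset v := by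
    intro z hz
    obtain ⟨hzA, hzB⟩ := Finset.mem_inter.mp hz
    rcases mem_closedNbhd_pair_cases G hzB with h' | h'
    · exact absurd (h' ▸ hzA) hvA
    · exact (mem_nbrF G).mpr h'
  have hintle : (A ∩ B).card ≤ 3 := hnbruc ▸ Finset.card_le_card hsub1
  have hnbru : A ∩ B = G.neighborFinset u :=
    Finset.eq_of_subset_of_card_le hsub1 (by omega)
  have hnn : G.neighborFinset u = G.neighborFinset v :=
    Finset.eq_of_subset_of_card_le (hnbru ▸ hsub2) (by omega)
  have hunion5 : (A ∪ B).card = 5 := by omega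
  have hnbr_subA : G.neighborFinset u ⊆ A := fun z hz =>
    mem_closedNbhd_of_adj G ((mem_nbrF G).mp hz)
  -- two transfer helpers
  have hvu : ∀ {z : V}, G.Adj v z → z ∈ G.neighborFinset u := by
    intro z h; rw [hnn]; exact (mem_nbrF G).mpr h
  have huv : ∀ {z : V}, G.Adj u z → G.Adj v z := by
    intro z h
    apply (mem_nbrF G).mp
    rw [← hnn]; exact (mem_nbrF G).mpr h
  have hstep : ∀ w ∈ G.neighborFinset u, closedNbhd G {w} ⊆ A ∪ B := by
    intro w hw
    have hadjuw : G.Adj u w := (mem_nbrF G).mp hw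
    have hadjvw : G.Adj v w := huv hadjuw
    have hBsub : B ⊆ A ∪ closedNbhd G {w} := by
      intro z hz
      rcases mem_closedNbhd_pair_cases G hz with h' | h'
      · exact Finset.mem_union_right _ (h' ▸ mem_closedNbhd_of_adj G hadjvw.symm)
      · exact Finset.mem_union_left _ (hnbr_subA (hvu h'))
    have hABsub : A ∪ B ⊆ A ∪ closedNbhd G {w} :=
      Finset.union_subset Finset.subset_union_left hBsub
    have hgood : IsPDS G {u, w} := by
      refine isPDS_of_le G (le_refl 1) ?_ hS
      rw [pdSeq_one, pdSeq_one, closedNbhd_pair, closedNbhd_pair]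
      exact hABsub
    have hc5p := hH _ hgood (Finset.card_pair hadjuw.ne)
    rw [pdSeq_one, closedNbhd_pair] at hc5p
    have hc5 : (A ∪ closedNbhd G {w}).card ≤ 5 := hc5p
    have hEq : A ∪ B = A ∪ closedNbhd G {w} :=
      Finset.eq_of_subset_of_card_le hABsub (by omega)
    intro z hz
    rw [hEq]
    exact Finset.mem_union_right _ hz
  have hcl : ∀ z ∈ A ∪ B, ∀ y, G.Adj z y → y ∈ A ∪ B := by
    intro z hz y hzy
    rcases Finset.mem_union.mp hz with hzA | hzB
    · rcases mem_closedNbhd_pair_cases G hzA with h' | h'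
      · exact Finset.mem_union_left _ (mem_closedNbhd_of_adj G (h' ▸ hzy))
      · exact hstep z ((mem_nbrF G).mpr h') (mem_closedNbhd_of_adj G hzy)
    · rcases mem_closedNbhd_pair_cases G hzB with h' | h'
      · exact Finset.mem_union_left _ (hnbr_subA (hvu (h' ▸ hzy)))
      · exact hstep z (hvu h') (mem_closedNbhd_of_adj G hzy)
  have hKuniv : A ∪ B = Finset.univ :=
    closed_eq_univ G hconn (Finset.mem_union_left _ (mem_closedNbhd_self G u)) hcl
  -- now show {u} is a PDS
  obtain ⟨w, hw⟩ : (G.neighborFinset u).Nonempty := Finset.card_pos.mp (by omega)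
  have hadjuw : G.Adj u w := (mem_nbrF G).mp hw
  have hadjvw : G.Adj v w := huv hadjuw
  have e2 : pdSeq G {u} 2 = pdStep G (closedNbhd G {u}) := rfl
  have hprop : (G.neighborFinset w \ A).card ≤ 1 := by
    have hsub : G.neighborFinset w \ A ⊆ {v} := by
      intro z hz
      obtain ⟨hz1, hz2⟩ := Finset.mem_sdiff.mp hz
      have hzAB : z ∈ A ∪ B := hKuniv ▸ Finset.mem_univ z
      rcases Finset.mem_union.mp hzAB with h' | h'
      · exact absurd h' hz2
      · rcases mem_closedNbhd_pair_cases G h' with h'' | h''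
        · exact Finset.mem_singleton.mpr h''
        · exact absurd (hnbr_subA (hvu h'')) hz2
    exact le_trans (Finset.card_le_card hsub) (by simp)
  have hNw : closedNbhd G {w} ⊆ pdSeq G {u} 2 := by
    rw [e2]
    exact closedNbhd_subset_pdStep G (mem_closedNbhd_of_adj G hadjuw) hprop
  have hA2 : A ⊆ pdSeq G {u} 2 := by
    rw [e2]; exact subset_pdStep G _
  have hB2 : B ⊆ pdSeq G {u} 2 := by
    intro z hz
    rcases mem_closedNbhd_pair_cases G hz with h' | h'
    · exact hNw (h' ▸ mem_closedNbhd_of_adj G hadjvw.symm)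
    · exact hA2 (hnbr_subA (hvu h'))
  have huniv2 : pdSeq G {u} 2 = Finset.univ := by
    apply Finset.univ_subset_iff.mp
    rw [← hKuniv]
    exact Finset.union_subset hA2 hB2
  exact hNoSingle u ⟨2, huniv2⟩

end CaseII3

section CaseI

variable {V : Type*} [Fintype V] (G : SimpleGraph V)

lemma case_I (hH1 : ∀ T, IsPDS G T → T.card = 2 → (pdSeq G T 1).card ≤ 5)
    (hNoSingle : ∀ x : V, ¬ IsPDS G {x}) (hdeg : ∀ x : V, 2 ≤ G.degree x)
    {u v : V} (hadj : G.Adj u v) (hS : IsPDS G {u, v}) : False := by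
  have hne : u ≠ v := hadj.ne
  by_cases hdu2 : G.degree u = 2
  · exact hNoSingle v (key2 G hadj hdu2 hS)
  by_cases hdv2 : G.degree v = 2
  · have hS' : IsPDS G {v, u} := by rwa [Finset.pair_comm]
    exact hNoSingle u (key2 G hadj.symm hdv2 hS')
  have hdu3 : 3 ≤ G.degree u := by have := hdeg u; omega
  have hdv3 : 3 ≤ G.degree v := by have := hdeg v; omega
  set A := closedNbhd G {u} with hAdef
  set B := closedNbhd G {v} with hBdef
  have hAcard : A.card = G.degree u + 1 := by rw [hAdef, card_closedNbhd_singleton]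
  have hBcard : B.card = G.degree v + 1 := by rw [hBdef, card_closedNbhd_singleton]
  have hABcard : (A ∪ B).card ≤ 5 := by
    have := hH1 _ hS (Finset.card_pair hne)
    rwa [pdSeq_one, closedNbhd_pair, ← hAdef, ← hBdef] at this
  have hAle : A.card ≤ 5 := le_trans (Finset.card_le_card Finset.subset_union_left) hABcard
  have hBle : B.card ≤ 5 := le_trans (Finset.card_le_card Finset.subset_union_right) hABcard
  by_cases hdu4 : G.degree u = 4
  · have hEq : A = A ∪ B :=
      Finset.eq_of_subset_of_card_le Finset.subset_union_left (by omega)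
    have hsub : pdSeq G {u, v} 1 ⊆ closedNbhd G {u} := by
      rw [pdSeq_one, closedNbhd_pair]
      intro z hz
      have hz' : z ∈ A ∪ B := hz
      rw [← hEq] at hz'
      exact hz'
    exact hub5 G hH1 hNoSingle hS hsub (by rw [← hAdef]; omega)
  by_cases hdv4 : G.degree v = 4
  · have hEq : B = A ∪ B :=
      Finset.eq_of_subset_of_card_le Finset.subset_union_right (by omega)
    have hsub : pdSeq G {u, v} 1 ⊆ closedNbhd G {v} := by
      rw [pdSeq_one, closedNbhd_pair]
      intro z hz
      have hz' : z ∈ A ∪ B := hz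
      rw [← hEq] at hz'
      exact hz'
    exact hub5 G hH1 hNoSingle hS hsub (by rw [← hBdef]; omega)
  have hdu : G.degree u = 3 := by omega
  have hdv : G.degree v = 3 := by omega
  have hid := Finset.card_union_add_card_inter A B
  have hnotsub : ¬ (A ∩ B ⊆ ({u, v} : Finset V)) := by
    intro h
    have := Finset.card_le_card h
    rw [Finset.card_pair hne] at this
    omega
  obtain ⟨w, hwAB, hwuv⟩ := Finset.not_subset.mp hnotsub
  have hwu : w ≠ u := by intro h; exact hwuv (by simp [h])
  have hwv : w ≠ v := by intro h; exact hwuv (by simp [h])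
  obtain ⟨hwA, hwB⟩ := Finset.mem_inter.mp hwAB
  have hadjuw : G.Adj u w := by
    rcases mem_closedNbhd_pair_cases G hwA with h' | h'
    · exact absurd h' hwu
    · exact h'
  have hadjvw : G.Adj v w := by
    rcases mem_closedNbhd_pair_cases G hwB with h' | h'
    · exact absurd h' hwv
    · exact h'
  have hnbruc : (G.neighborFinset u).card = 3 := hdu
  have hnbrvc : (G.neighborFinset v).card = 3 := hdv
  have h1 : (G.neighborFinset u \ closedNbhd G {w}).card ≤ 1 := by
    have hsubvw : ({v, w} : Finset V) ⊆ G.neighborFinset u := by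
      intro z hz
      rcases Finset.mem_insert.mp hz with rfl | hz'
      · exact (mem_nbrF G).mpr hadj
      · rw [Finset.mem_singleton] at hz'
        exact (mem_nbrF G).mpr (hz' ▸ hadjuw)
    have hsub : G.neighborFinset u \ closedNbhd G {w} ⊆
        G.neighborFinset u \ ({v, w} : Finset V) := by
      refine Finset.sdiff_subset_sdiff (le_refl _) ?_
      intro z hz
      rcases Finset.mem_insert.mp hz with hz' | hz'
      · rw [hz']
        exact mem_closedNbhd_of_adj G hadjvw.symm
      · rw [Finset.mem_singleton] at hz'
        rw [hz']
        exact mem_closedNbhd_self G w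
    refine le_trans (Finset.card_le_card hsub) ?_
    rw [Finset.card_sdiff_of_subset hsubvw, Finset.card_pair (by intro h; exact hwv h.symm)]
    omega
  have h2 : (G.neighborFinset v \ (closedNbhd G {u} ∪ closedNbhd G {w})).card ≤ 1 := by
    have hsubuw : ({u, w} : Finset V) ⊆ G.neighborFinset v := by
      intro z hz
      rcases Finset.mem_insert.mp hz with rfl | hz'
      · exact (mem_nbrF G).mpr hadj.symm
      · rw [Finset.mem_singleton] at hz'
        exact (mem_nbrF G).mpr (hz' ▸ hadjvw)
    have hsub : G.neighborFinset v \ (closedNbhd G {u} ∪ closedNbhd G {w}) ⊆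
        G.neighborFinset v \ ({u, w} : Finset V) := by
      refine Finset.sdiff_subset_sdiff (le_refl _) ?_
      intro z hz
      rcases Finset.mem_insert.mp hz with hz' | hz'
      · rw [hz']
        exact Finset.mem_union_left _ (mem_closedNbhd_self G u)
      · rw [Finset.mem_singleton] at hz'
        rw [hz']
        exact Finset.mem_union_right _ (mem_closedNbhd_self G w)
    refine le_trans (Finset.card_le_card hsub) ?_
    rw [Finset.card_sdiff_of_subset hsubuw, Finset.card_pair (by intro h; exact hwu h.symm)]
    omega
  exact hNoSingle w (cnbr G hadjuw.symm hadjvw.symm h1 h2 hS)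

end CaseI

theorem stmt_10 {V : Type*} [Fintype V] (G : SimpleGraph V) (n : ℕ)
    (hn : Fintype.card V = n) (hconn : G.Connected)
    (hdelta : G.minDegree = 2) (hgamma : pdNum G = 2) :
    pdRad G ≤ n - 5 := by
  subst hn
  by_contra hcon
  have hdeg : ∀ x : V, 2 ≤ G.degree x := fun x => hdelta ▸ G.minDegree_le_degree x
  have hNoSingle : ∀ x : V, ¬ IsPDS G {x} := by
    intro x hx
    have h1 : pdNum G ≤ 1 := Nat.sInf_le ⟨{x}, hx, Finset.card_singleton x⟩
    omega
  have hset : {k | ∃ S : Finset V, IsPDS G S ∧ S.card = k}.Nonempty := by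
    by_contra h
    rw [Set.not_nonempty_iff_eq_empty] at h
    have : pdNum G = 0 := by rw [pdNum, h, Nat.sInf_empty]
    omega
  obtain ⟨S, hSpds, hScard⟩ := Nat.sInf_mem hset
  have hScard2 : S.card = 2 := by rw [hScard]; exact hgamma
  have hH : ∀ T, IsPDS G T → T.card = 2 → ∀ k, 1 ≤ k → (pdSeq G T k).card ≤ k + 4 := by
    intro T hT h2 k hk
    by_contra hbig
    push_neg at hbig
    have hle : (pdSeq G T k).card ≤ Fintype.card V := Finset.card_le_univ _
    have hrad := radius_bound G hT (Fintype.card V - (k + 5)) k hk (by omega)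
    have hmem : pdRadS G T ∈
        {r | ∃ S : Finset V, IsPDS G S ∧ S.card = pdNum G ∧ pdRadS G S = r} :=
      ⟨T, hT, by rw [h2, hgamma], rfl⟩
    have hprad : pdRad G ≤ pdRadS G T := Nat.sInf_le hmem
    exact hcon (by omega)
  have hH1 : ∀ T, IsPDS G T → T.card = 2 → (pdSeq G T 1).card ≤ 5 := by
    intro T a b
    have := hH T a b 1 le_rfl
    omega
  obtain ⟨u, v, hne, rfl⟩ := Finset.card_eq_two.mp hScard2
  by_cases hadj : G.Adj u v
  · exact case_I G hH1 hNoSingle hdeg hadj hSpds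
  · by_cases hdu2 : G.degree u = 2
    · obtain ⟨w, hw⟩ :=
        master_II G (hH1 _ hSpds (Finset.card_pair hne)) (hdeg v) hne hadj hdu2 hSpds
      exact hNoSingle w hw
    by_cases hdv2 : G.degree v = 2
    · have hS' : IsPDS G {v, u} := by rwa [Finset.pair_comm]
      obtain ⟨w, hw⟩ :=
        master_II G (hH1 _ hS' (Finset.card_pair hne.symm)) (hdeg u) hne.symm
          (fun h => hadj h.symm) hdv2 hS'
      exact hNoSingle w hw
    · have h3u : 3 ≤ G.degree u := by have := hdeg u; omega
      have h3v : 3 ≤ G.degree v := by have := hdeg v; omega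
      have hABcard : (closedNbhd G {u} ∪ closedNbhd G {v}).card ≤ 5 := by
        have := hH1 _ hSpds (Finset.card_pair hne)
        rwa [pdSeq_one, closedNbhd_pair] at this
      have hvA : v ∉ closedNbhd G {u} := by
        intro h
        rcases mem_closedNbhd_pair_cases G h with h' | h'
        · exact hne h'.symm
        · exact hadj h'
      have huB : u ∉ closedNbhd G {v} := by
        intro h
        rcases mem_closedNbhd_pair_cases G h with h' | h'
        · exact hne h'
        · exact hadj h'.symm
      have hins1 : insert v (closedNbhd G {u}) ⊆ closedNbhd G {u} ∪ closedNbhd G {v} := by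
        refine Finset.insert_subset ?_ Finset.subset_union_left
        exact Finset.mem_union_right _ (mem_closedNbhd_self G v)
      have hins2 : insert u (closedNbhd G {v}) ⊆ closedNbhd G {u} ∪ closedNbhd G {v} := by
        refine Finset.insert_subset ?_ Finset.subset_union_right
        exact Finset.mem_union_left _ (mem_closedNbhd_self G u)
      have hc1 := Finset.card_le_card hins1
      have hc2 := Finset.card_le_card hins2
      rw [Finset.card_insert_of_notMem hvA] at hc1
      rw [Finset.card_insert_of_notMem huB] at hc2
      have hAcard : (closedNbhd G {u}).card = G.degree u + 1 := card_closedNbhd_singleton G u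
      have hBcard : (closedNbhd G {v}).card = G.degree v + 1 := card_closedNbhd_singleton G v
      have hdu : G.degree u = 3 := by omega
      have hdv : G.degree v = 3 := by omega
      exact case_II3 G hconn hH1 hNoSingle hne hadj hdu hdv hSpds
end
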